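/- Let R be a transient symmetric random walk on ℤ, let A be a set with finite capacity, let x ∉ A, and set A' = A ∪ {x}. Then cap(A') - cap(A) = E_A(x) · E'_A(x), where E_A(x) = P_x(T_A = ∞) and E'_A(x) = P_x(T_{A'} = ∞). In particular, cap(A') - cap(A) lies in the interval [E'_A(x)^2, E_A(x)^2]. -/

import Mathlib

open MeasureTheory Filter Finset

noncomputable section

/-- Position at time `n` of the random walk started at `x` whose increments are `ω`. -/
def walkPos (x : ℤ) (ω : ℕ → ℤ) (n : ℕ) : ℤ := x + ∑ i ∈ Finset.range n, ω i

/-- The event that the walk started at `x` never visits `A` at a positive time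
(`T_A = ∞`). -/
def escapes (x : ℤ) (A : Set ℤ) : Set (ℕ → ℤ) :=
  {ω | ∀ n : ℕ, 0 < n → walkPos x ω n ∉ A}

/-- The event that the walk started at `x` hits `A` at some positive time (`T_A < ∞`). -/
def hits (x : ℤ) (A : Set ℤ) : Set (ℕ → ℤ) :=
  {ω | ∃ n : ℕ, 0 < n ∧ walkPos x ω n ∈ A}

/-- The event that the walk started at `x` first hits `A` at the point `a`
(`T_A < ∞` and `R_{T_A} = a`). -/
def hitsAt (x : ℤ) (A : Set ℤ) (a : ℤ) : Set (ℕ → ℤ) :=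
  {ω | ∃ n : ℕ, 0 < n ∧ walkPos x ω n = a ∧
      ∀ m : ℕ, 0 < m → m < n → walkPos x ω m ∉ A}

/-- `μ` is the law of the iid increment sequence of a random walk on `ℤ` with
step distribution `p`. -/
def IsRandomWalk (μ : Measure (ℕ → ℤ)) (p : ℤ → ENNReal) : Prop :=
  IsProbabilityMeasure μ ∧ (∑' x : ℤ, p x) = 1 ∧
    ∀ (s : Finset ℕ) (f : ℕ → ℤ),
      μ {ω | ∀ i ∈ s, ω i = f i} = ∏ i ∈ s, p (f i)

/-- The Green function `G(x) = Σ_n P_0(R_n = x)`, with values in `ℝ≥0∞`. -/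
def greenE (μ : Measure (ℕ → ℤ)) (x : ℤ) : ENNReal :=
  ∑' n : ℕ, μ {ω | walkPos 0 ω n = x}

/-- The real-valued Green function. -/
def greenR (μ : Measure (ℕ → ℤ)) (x : ℤ) : ℝ := (greenE μ x).toReal

/-- The walk is transient: the Green function is finite. -/
def Transient (μ : Measure (ℕ → ℤ)) : Prop := greenE μ 0 ≠ ⊤

/-- The walk is irreducible: every point is reachable from `0`. -/
def Irreducible' (μ : Measure (ℕ → ℤ)) : Prop :=
  ∀ x : ℤ, ∃ n : ℕ, 0 < μ {ω | walkPos 0 ω n = x}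

/-- The escape probability `E_A(x) = P_x(T_A = ∞)`. -/
def escProb (μ : Measure (ℕ → ℤ)) (A : Set ℤ) (x : ℤ) : ℝ := (μ (escapes x A)).toReal

/-- The capacity of a finite set: the sum of the escape probabilities. -/
def capR (μ : Measure (ℕ → ℤ)) (A : Finset ℤ) : ℝ := ∑ a ∈ A, escProb μ (↑A) a

/-- The diameter `max A - min A` of a finite subset of `ℤ`. -/
def finDiam (A : Finset ℤ) : ℤ := WithBot.unbotD 0 A.max - WithTop.untopD 0 A.min

/-- The diameter, as a real number. -/
def diamR (A : Finset ℤ) : ℝ := (finDiam A : ℝ)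

/-- An `α`-walk: a symmetric random walk whose one-step probabilities satisfy
`p x ≈ |x| ^ (-1-α)`. -/
def IsAlphaWalk (μ : Measure (ℕ → ℤ)) (p : ℤ → ENNReal) (α : ℝ) : Prop :=
  IsRandomWalk μ p ∧ (∀ x : ℤ, p (-x) = p x) ∧
    ∃ c C : ℝ, 0 < c ∧ 0 < C ∧ ∀ x : ℤ, x ≠ 0 →
      ENNReal.ofReal (c * |(x : ℝ)| ^ (-1 - α)) ≤ p x ∧
        p x ≤ ENNReal.ofReal (C * |(x : ℝ)| ^ (-1 - α))

/-- The DLA process driven by a transient random walk: a Markov chain of growing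
finite subsets of `ℤ`, starting from `{0}`, where given the history up to time `n`,
a new point `x ∉ A_n` is attached with probability
`Σ_{a ∈ A_n} p_{x,a} E_{A_n}(x) / cap(A_n)`. -/
structure IsDLA (μ : Measure (ℕ → ℤ)) (p : ℤ → ENNReal) {Ω : Type}
    [MeasurableSpace Ω] (P : Measure Ω) (A : ℕ → Ω → Finset ℤ) : Prop where
  prob : IsProbabilityMeasure P
  init : ∀ᵐ ω ∂P, A 1 ω = {0}
  grow : ∀ n : ℕ, 1 ≤ n → ∀ᵐ ω ∂P, ∃ x ∉ A n ω, A (n + 1) ω = insert x (A n ω)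
  markov : ∀ n : ℕ, 1 ≤ n → ∀ H : ℕ → Finset ℤ, ∀ x : ℤ, x ∉ H n →
    P {ω | A (n + 1) ω = insert x (H n) ∧ ∀ k, 1 ≤ k → k ≤ n → A k ω = H k}
      = (∑ a ∈ H n, p (a - x)) * μ (escapes x ↑(H n))
          / (∑ b ∈ H n, μ (escapes b ↑(H n)))
        * P {ω | ∀ k, 1 ≤ k → k ≤ n → A k ω = H k}

/-- The event that the walk from `y` first hits `A` at `a`, the last site visited
before hitting `A` being `x` (`T_A < ∞`, `R_{T_A} = a`, `R_{T_A - 1} = x`). -/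
def hitsAtVia (y : ℤ) (A : Set ℤ) (a x : ℤ) : Set (ℕ → ℤ) :=
  {ω | ∃ n : ℕ, 0 < n ∧ walkPos y ω n = a ∧ walkPos y ω (n - 1) = x ∧
      ∀ m : ℕ, 0 < m → m < n → walkPos y ω m ∉ A}

/-- The capacity of a (possibly infinite) set, with values in `ℝ≥0∞`. -/
def capSetE (μ : MeasureTheory.Measure (ℕ → ℤ)) (A : Set ℤ) : ENNReal :=
  ∑' a : A, μ (escapes a A)

namespace CapInc

open Classical in
/-- membership in `B` is determined by coordinates `< n`. -/
def DetBy (n : ℕ) (B : Set (ℕ → ℤ)) : Prop :=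
  ∀ ω ω' : ℕ → ℤ, (∀ i, i < n → ω i = ω' i) → ω ∈ B → ω' ∈ B

def ext' (n : ℕ) (v : Fin n → ℤ) : ℕ → ℤ := fun i => if h : i < n then v ⟨i, h⟩ else 0

def cylF (n : ℕ) (v : Fin n → ℤ) : Set (ℕ → ℤ) := {ω | ∀ i : Fin n, ω i = v i}

def shiftSeq (n : ℕ) (ω : ℕ → ℤ) : ℕ → ℤ := fun i => ω (n + i)

lemma walkPos_congr {y : ℤ} {ω ω' : ℕ → ℤ} {n m : ℕ} (h : ∀ i, i < n → ω i = ω' i)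
    (hm : m ≤ n) : walkPos y ω m = walkPos y ω' m := by
  unfold walkPos
  congr 1
  exact Finset.sum_congr rfl fun i hi => h i (lt_of_lt_of_le (Finset.mem_range.1 hi) hm)

lemma walkPos_add (y : ℤ) (ω : ℕ → ℤ) (n m : ℕ) :
    walkPos y ω (n + m) = walkPos (walkPos y ω n) (shiftSeq n ω) m := by
  unfold walkPos shiftSeq
  rw [Finset.sum_range_add]
  ring

lemma measurable_walkPos (y : ℤ) (n : ℕ) : Measurable fun ω : ℕ → ℤ => walkPos y ω n := by
  unfold walkPos
  exact measurable_const.add (Finset.measurable_sum _ fun i _ => measurable_pi_apply i)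

lemma measurable_shiftSeq (n : ℕ) : Measurable (shiftSeq n) :=
  measurable_pi_lambda _ fun i => measurable_pi_apply (n + i)

lemma measurableSet_escapes (y : ℤ) (B : Set ℤ) : MeasurableSet (escapes y B) := by
  have h : escapes y B = ⋂ n : ℕ, {ω | 0 < n → walkPos y ω n ∉ B} := by
    ext ω; simp [escapes, Set.mem_iInter]
  rw [h]
  refine MeasurableSet.iInter fun n => ?_
  have : {ω : ℕ → ℤ | 0 < n → walkPos y ω n ∉ B}
      = (fun ω => walkPos y ω n) ⁻¹' {z | 0 < n → z ∉ B} := rfl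
  rw [this]
  exact measurable_walkPos y n (by trivial)

lemma measurableSet_cylF (n : ℕ) (v : Fin n → ℤ) : MeasurableSet (cylF n v) := by
  have h : cylF n v = ⋂ i : Fin n, (fun ω : ℕ → ℤ => ω i) ⁻¹' {v i} := by
    ext ω; simp [cylF]
  rw [h]
  exact MeasurableSet.iInter fun i => measurable_pi_apply (i : ℕ) (by trivial)

lemma cylF_disjoint {n : ℕ} {v w : Fin n → ℤ} (h : v ≠ w) :
    Disjoint (cylF n v) (cylF n w) := by
  rw [Set.disjoint_left]
  intro ω hv hw
  exact h (funext fun i => (hv i).symm.trans (hw i))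



/-- the point-cylinder sets -/
def cylSets : Set (Set (ℕ → ℤ)) :=
  {S | ∃ (s : Finset ℕ) (f : ℕ → ℤ), S = {ω | ∀ i ∈ s, ω i = f i}}

lemma isPiSystem_cylSets : IsPiSystem cylSets := by
  rintro S1 ⟨s, f, rfl⟩ S2 ⟨t, g, rfl⟩ ⟨ω0, h1, h2⟩
  classical
  refine ⟨s ∪ t, fun i => if i ∈ s then f i else g i, ?_⟩
  ext ω
  simp only [Set.mem_inter_iff, Set.mem_setOf_eq, Finset.mem_union]
  constructor
  · rintro ⟨hf, hg⟩ i hi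
    by_cases his : i ∈ s
    · simp [his, hf i his]
    · simp [his, hg i (hi.resolve_left his)]
  · intro h
    constructor
    · intro i his
      have := h i (Or.inl his)
      simpa [his] using this
    · intro i hit
      have := h i (Or.inr hit)
      by_cases his : i ∈ s
      · simpa [his, ← h1 i his, h2 i hit] using this
      · simpa [his] using this

lemma generateFrom_cylSets :
    (inferInstance : MeasurableSpace (ℕ → ℤ)) = MeasurableSpace.generateFrom cylSets := by
  apply le_antisymm
  · rw [show (inferInstance : MeasurableSpace (ℕ → ℤ)) = MeasurableSpace.pi from rfl]
    refine iSup_le fun i => ?_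
    intro s hs
    obtain ⟨t, -, rfl⟩ := hs
    have ht : ((fun ω : ℕ → ℤ => ω i) ⁻¹' t) = ⋃ k ∈ t, {ω : ℕ → ℤ | ∀ j ∈ ({i} : Finset ℕ), ω j = k} := by
      ext ω; simp
    rw [ht]
    refine MeasurableSet.biUnion (Set.to_countable t) fun k _ => ?_
    exact MeasurableSpace.measurableSet_generateFrom ⟨{i}, fun _ => k, rfl⟩
  · refine MeasurableSpace.generateFrom_le ?_
    rintro S ⟨s, f, rfl⟩
    have : {ω : ℕ → ℤ | ∀ i ∈ s, ω i = f i} = ⋂ i ∈ s, (fun ω : ℕ → ℤ => ω i) ⁻¹' {f i} := by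
      ext ω; simp
    rw [this]
    exact MeasurableSet.biInter (s.countable_toSet) fun i _ =>
      measurable_pi_apply i (by trivial)



lemma measurableSet_cylSet (s : Finset ℕ) (f : ℕ → ℤ) :
    MeasurableSet {ω : ℕ → ℤ | ∀ i ∈ s, ω i = f i} := by
  have h : {ω : ℕ → ℤ | ∀ i ∈ s, ω i = f i} = ⋂ i ∈ s, (fun ω : ℕ → ℤ => ω i) ⁻¹' {f i} := by
    ext ω; simp
  rw [h]
  exact MeasurableSet.biInter (s.countable_toSet) fun i _ => measurable_pi_apply i (by trivial)

variable {μ : Measure (ℕ → ℤ)} {p : ℤ → ENNReal}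

lemma ext'_lt (n : ℕ) (v : Fin n → ℤ) {i : ℕ} (h : i < n) : ext' n v i = v ⟨i, h⟩ := by
  simp [ext', h]

lemma cylF_measure (hw : IsRandomWalk μ p) (n : ℕ) (v : Fin n → ℤ) :
    μ (cylF n v) = ∏ i ∈ Finset.range n, p (ext' n v i) := by
  have h := hw.2.2 (Finset.range n) (ext' n v)
  rw [← h]
  congr 1
  ext ω
  simp only [cylF, Set.mem_setOf_eq, Finset.mem_range]
  constructor
  · intro hv i hi
    rw [ext'_lt n v hi]; exact hv ⟨i, hi⟩
  · intro hv i
    rw [← ext'_lt n v i.isLt]; exact hv i i.isLt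

open Classical in
/-- canonical decomposition of a `DetBy n` set into cylinders. -/
lemma DetBy.eq_iUnion {n : ℕ} {B : Set (ℕ → ℤ)} (h : DetBy n B) :
    B = ⋃ v : Fin n → ℤ, if ext' n v ∈ B then cylF n v else ∅ := by
  ext ω
  simp only [Set.mem_iUnion]
  constructor
  · intro hω
    refine ⟨fun i => ω i, ?_⟩
    have hmem : ext' n (fun i : Fin n => ω i) ∈ B := by
      refine h ω _ (fun i hi => ?_) hω
      simp [ext', hi]
    rw [if_pos hmem]
    intro i; rfl
  · rintro ⟨v, hv⟩
    by_cases hm : ext' n v ∈ B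
    · rw [if_pos hm] at hv
      refine h (ext' n v) ω (fun i hi => ?_) hm
      rw [ext'_lt n v hi]; exact (hv ⟨i, hi⟩).symm
    · rw [if_neg hm] at hv; exact absurd hv (Set.notMem_empty ω)

open Classical in
lemma DetBy.measurableSet {n : ℕ} {B : Set (ℕ → ℤ)} (h : DetBy n B) : MeasurableSet B := by
  rw [h.eq_iUnion]
  refine MeasurableSet.iUnion fun v => ?_
  split
  · exact measurableSet_cylF n v
  · exact MeasurableSet.empty

open Classical in
lemma pairwise_piece {n : ℕ} (B : Set (ℕ → ℤ)) :
    Pairwise (Function.onFun Disjoint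
      (fun v : Fin n → ℤ => if ext' n v ∈ B then cylF n v else ∅)) := by
  intro v w hvw
  simp only [Function.onFun]
  split_ifs <;> simp [cylF_disjoint hvw]

open Classical in
lemma DetBy.measure_eq {n : ℕ} {B : Set (ℕ → ℤ)} (h : DetBy n B) (hw : IsRandomWalk μ p) :
    μ B = ∑' v : Fin n → ℤ,
      (if ext' n v ∈ B then ∏ i ∈ Finset.range n, p (ext' n v i) else 0) := by
  conv_lhs => rw [h.eq_iUnion]
  rw [measure_iUnion (pairwise_piece B)
    (fun v => by split; exacts [measurableSet_cylF n v, MeasurableSet.empty])]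
  refine tsum_congr fun v => ?_
  split_ifs with hv
  · exact cylF_measure hw n v
  · simp

/-- independence of a prefix-determined event and a shifted event: cylinder case. -/
lemma cylF_inter_shift (hw : IsRandomWalk μ p) (n : ℕ) (v : Fin n → ℤ) {C : Set (ℕ → ℤ)}
    (hC : MeasurableSet C) :
    μ (cylF n v ∩ shiftSeq n ⁻¹' C) = μ (cylF n v) * μ C := by
  haveI : IsProbabilityMeasure μ := hw.1
  have key : (μ.restrict (cylF n v)).map (shiftSeq n) = (μ (cylF n v)) • μ := by
    haveI : IsFiniteMeasure ((μ.restrict (cylF n v)).map (shiftSeq n)) :=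
      Measure.isFiniteMeasure_map _ _
    haveI : IsFiniteMeasure ((μ (cylF n v)) • μ) := by
      refine ⟨?_⟩
      rw [Measure.smul_apply, smul_eq_mul, measure_univ, mul_one]
      exact (measure_lt_top μ _)
    refine ext_of_generate_finite cylSets generateFrom_cylSets isPiSystem_cylSets ?_ ?_
    · rintro S ⟨s, f, rfl⟩
      classical
      rw [Measure.map_apply (measurable_shiftSeq n)
        (measurableSet_cylSet s f),
        Measure.restrict_apply' (measurableSet_cylF n v), Measure.smul_apply, smul_eq_mul]
      have hset : shiftSeq n ⁻¹' {ω | ∀ i ∈ s, ω i = f i} ∩ cylF n v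
          = {ω | ∀ j ∈ Finset.range n ∪ s.map ⟨fun i => n + i, add_right_injective n⟩,
              ω j = (fun j => if h : j < n then v ⟨j, h⟩ else f (j - n)) j} := by
        ext ω
        simp only [Set.mem_inter_iff, Set.mem_preimage, Set.mem_setOf_eq, cylF,
          Finset.mem_union, Finset.mem_range, Finset.mem_map, Function.Embedding.coeFn_mk]
        constructor
        · rintro ⟨hs, hv⟩ j hj
          rcases hj with hj | ⟨i, hi, rfl⟩
          · simp only [hj, dif_pos]; exact hv ⟨j, hj⟩
          · have : ¬ (n + i < n) := by omega
            simp only [this, dif_neg, not_false_iff]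
            have : n + i - n = i := by omega
            rw [this]
            exact hs i hi
        · intro hall
          constructor
          · intro i hi
            have := hall (n + i) (Or.inr ⟨i, hi, rfl⟩)
            have hni : ¬ (n + i < n) := by omega
            simpa [hni, Nat.add_sub_cancel_left, shiftSeq] using this
          · intro i
            have := hall (i : ℕ) (Or.inl i.isLt)
            simpa [i.isLt] using this
      rw [hset, hw.2.2]
      have hdisj : Disjoint (Finset.range n) (s.map ⟨fun i => n + i, add_right_injective n⟩) := by
        rw [Finset.disjoint_left]
        rintro j hj hj'
        rw [Finset.mem_range] at hj
        rw [Finset.mem_map] at hj'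
        obtain ⟨i, -, rfl⟩ := hj'
        simp only [Function.Embedding.coeFn_mk] at hj
        omega
      rw [Finset.prod_union hdisj, Finset.prod_map]
      have h1 : ∏ j ∈ Finset.range n,
          p (if h : j < n then v ⟨j, h⟩ else f (j - n)) = μ (cylF n v) := by
        rw [cylF_measure hw n v]
        refine Finset.prod_congr rfl fun j hj => ?_
        rw [Finset.mem_range] at hj
        simp [hj, ext']
      have h2 : ∏ i ∈ s, p ((fun j => if h : j < n then v ⟨j, h⟩ else f (j - n))
          ((⟨fun i => n + i, add_right_injective n⟩ : ℕ ↪ ℕ) i)) = μ {ω | ∀ i ∈ s, ω i = f i} := by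
        rw [hw.2.2 s f]
        refine Finset.prod_congr rfl fun i _ => ?_
        simp only [Function.Embedding.coeFn_mk]
        have hni : ¬ (n + i < n) := by omega
        simp [Function.Embedding.coeFn_mk, hni, Nat.add_sub_cancel_left]
      rw [h1, h2, mul_comm]
    · rw [Measure.map_apply (measurable_shiftSeq n) MeasurableSet.univ,
        Set.preimage_univ, Measure.restrict_apply_univ, Measure.smul_apply, smul_eq_mul,
        measure_univ, mul_one]
  calc μ (cylF n v ∩ shiftSeq n ⁻¹' C)
      = μ (shiftSeq n ⁻¹' C ∩ cylF n v) := by rw [Set.inter_comm]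
    _ = (μ.restrict (cylF n v)) (shiftSeq n ⁻¹' C) := by
        rw [Measure.restrict_apply' (measurableSet_cylF n v)]
    _ = ((μ.restrict (cylF n v)).map (shiftSeq n)) C := by
        rw [Measure.map_apply (measurable_shiftSeq n) hC]
    _ = μ (cylF n v) * μ C := by rw [key, Measure.smul_apply, smul_eq_mul]

open Classical in
lemma DetBy.inter_shift {n : ℕ} {B : Set (ℕ → ℤ)} (h : DetBy n B) (hw : IsRandomWalk μ p)
    {C : Set (ℕ → ℤ)} (hC : MeasurableSet C) :
    μ (B ∩ shiftSeq n ⁻¹' C) = μ B * μ C := by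
  conv_lhs => rw [h.eq_iUnion, Set.iUnion_inter]
  rw [measure_iUnion ?disj ?meas]
  case disj =>
    intro v w hvw
    exact Set.disjoint_of_subset Set.inter_subset_left Set.inter_subset_left
      (pairwise_piece B hvw)
  case meas =>
    intro v
    refine MeasurableSet.inter ?_ ((measurable_shiftSeq n) hC)
    split; exacts [measurableSet_cylF n v, MeasurableSet.empty]
  rw [h.measure_eq hw, ← ENNReal.tsum_mul_right]
  refine tsum_congr fun v => ?_
  split_ifs with hv
  · rw [cylF_inter_shift hw n v hC, cylF_measure hw n v]
  · simp



def revFn (n : ℕ) (ω : ℕ → ℤ) : ℕ → ℤ := fun i => if i < n then -ω (n - 1 - i) else 0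

def revV (n : ℕ) (v : Fin n → ℤ) : Fin n → ℤ := fun i => -v i.rev

lemma revV_invol (n : ℕ) : Function.Involutive (revV n) := by
  intro v
  funext i
  simp [revV, Fin.rev_rev]

lemma revFn_ext' (n : ℕ) (v : Fin n → ℤ) : revFn n (ext' n v) = ext' n (revV n v) := by
  funext i
  by_cases h : i < n
  · have h' : n - 1 - i < n := by omega
    rw [revFn, if_pos h, ext'_lt n (revV n v) h, ext'_lt n v h']
    simp only [revV]
    congr 1
    congr 1
    ext
    simp [Fin.rev]
    omega
  · simp [revFn, ext', h]

lemma measure_revFn_preimage {μ : Measure (ℕ → ℤ)} {p : ℤ → ENNReal}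
    (hw : IsRandomWalk μ p) (hsym : ∀ x : ℤ, p (-x) = p x)
    {n : ℕ} {B : Set (ℕ → ℤ)} (hB : DetBy n B) :
    μ (revFn n ⁻¹' B) = μ B := by
  classical
  have hB' : DetBy n (revFn n ⁻¹' B) := by
    intro ω ω' hag hω
    have : revFn n ω = revFn n ω' := by
      funext i
      by_cases h : i < n
      · simp only [revFn, if_pos h]
        rw [hag (n - 1 - i) (by omega)]
      · simp [revFn, h]
    simpa [Set.mem_preimage, ← this] using hω
  rw [hB'.measure_eq hw, hB.measure_eq hw]
  rw [← Equiv.tsum_eq (Function.Involutive.toPerm _ (revV_invol n))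
    (fun v => if ext' n v ∈ revFn n ⁻¹' B then ∏ i ∈ Finset.range n, p (ext' n v i) else 0)]
  refine tsum_congr fun v => ?_
  simp only [Function.Involutive.coe_toPerm]
  have hmem : (ext' n (revV n v) ∈ revFn n ⁻¹' B) ↔ ext' n v ∈ B := by
    rw [Set.mem_preimage, revFn_ext', revV_invol n v]
  have hprod : ∏ i ∈ Finset.range n, p (ext' n (revV n v) i)
      = ∏ i ∈ Finset.range n, p (ext' n v i) := by
    have step : ∀ j ∈ Finset.range n, p (ext' n (revV n v) j) = p (ext' n v (n - 1 - j)) := by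
      intro j hj
      rw [Finset.mem_range] at hj
      have h' : n - 1 - j < n := by omega
      rw [ext'_lt n _ hj, ext'_lt n v h']
      simp only [revV]
      rw [hsym]
      congr 2
      ext
      simp [Fin.rev]
      omega
    rw [Finset.prod_congr rfl step]
    exact Finset.prod_range_reflect (fun j => p (ext' n v j)) n
  rw [hprod]
  exact if_congr hmem rfl rfl


/-- first hit of `B` happens at time `n+1` and lands at `a`. -/
def exact (y : ℤ) (B : Set ℤ) (a : ℤ) (n : ℕ) : Set (ℕ → ℤ) :=
  {ω | walkPos y ω (n + 1) = a ∧ ∀ m, 0 < m → m < n + 1 → walkPos y ω m ∉ B}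

lemma detBy_exact (y : ℤ) (B : Set ℤ) (a : ℤ) (n : ℕ) : DetBy (n + 1) (exact y B a n) := by
  intro ω ω' hag ⟨h1, h2⟩
  refine ⟨(walkPos_congr hag le_rfl).symm.trans h1, fun m hm hm' => ?_⟩
  rw [← walkPos_congr hag (le_of_lt hm')]
  exact h2 m hm hm'

lemma exact_disjoint {y : ℤ} {B : Set ℤ} {a b : ℤ} {n m : ℕ}
    (ha : a ∈ B) (hb : b ∈ B) (h : ¬(n = m ∧ a = b)) :
    Disjoint (exact y B a n) (exact y B b m) := by
  rw [Set.disjoint_left]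
  rintro ω ⟨h1, h2⟩ ⟨h3, h4⟩
  rcases lt_trichotomy n m with hlt | rfl | hlt
  · exact h4 (n + 1) (Nat.succ_pos n) (by omega) (h1 ▸ ha)
  · exact h (⟨rfl, h1.symm.trans h3⟩)
  · exact h2 (m + 1) (Nat.succ_pos m) (by omega) (h3 ▸ hb)

lemma exact_subset_hits {y : ℤ} {B : Set ℤ} {a : ℤ} (ha : a ∈ B) (n : ℕ) :
    exact y B a n ⊆ hits y B :=
  fun ω ⟨h1, _⟩ => ⟨n + 1, Nat.succ_pos n, h1 ▸ ha⟩

lemma hits_eq (y : ℤ) (B : Set ℤ) :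
    hits y B = ⋃ q : ℕ × ↥B, exact y B (q.2 : ℤ) q.1 := by
  classical
  ext ω
  simp only [Set.mem_iUnion]
  constructor
  · intro hω
    have hex : ∃ k, 0 < k ∧ walkPos y ω k ∈ B := hω
    let t := Nat.find hex
    obtain ⟨ht0, htB⟩ := Nat.find_spec hex
    refine ⟨⟨t - 1, ⟨walkPos y ω t, htB⟩⟩, ?_, ?_⟩
    · show walkPos y ω (t - 1 + 1) = _
      congr 1
      omega
    · intro m hm hm'
      have hmt : m < t := by omega
      have := Nat.find_min hex hmt
      push_neg at this
      exact this hm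
  · rintro ⟨q, h1, -⟩
    exact ⟨q.1 + 1, Nat.succ_pos _, h1 ▸ q.2.2⟩

lemma escapes_eq_compl (y : ℤ) (B : Set ℤ) : escapes y B = (hits y B)ᶜ := by
  ext ω
  simp only [escapes, hits, Set.mem_setOf_eq, Set.mem_compl_iff, not_exists]
  push_neg
  rfl

lemma escapes_mono {y : ℤ} {B C : Set ℤ} (h : B ⊆ C) : escapes y C ⊆ escapes y B :=
  fun ω hω n hn hB => hω n hn (h hB)

/-- decomposition of `escapes y A` according to the first hit of `insert x A`. -/
lemma escapes_decomp (y : ℤ) (A : Set ℤ) (x : ℤ) (hx : x ∉ A) :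
    escapes y A = escapes y (insert x A) ∪
      ⋃ n : ℕ, (exact y (insert x A) x n ∩ shiftSeq (n + 1) ⁻¹' escapes x A) := by
  classical
  ext ω
  simp only [Set.mem_union, Set.mem_iUnion, Set.mem_inter_iff, Set.mem_preimage]
  constructor
  · intro hω
    by_cases hesc : ω ∈ escapes y (insert x A)
    · exact Or.inl hesc
    · right
      have hex : ∃ k, 0 < k ∧ walkPos y ω k ∈ insert x A := by
        simp only [escapes, Set.mem_setOf_eq] at hesc
        push_neg at hesc
        obtain ⟨k, hk1, hk2⟩ := hesc
        exact ⟨k, hk1, hk2⟩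
      let t := Nat.find hex
      obtain ⟨ht0, htB⟩ := Nat.find_spec hex
      have hwt : walkPos y ω t = x := by
        rcases htB with h | h
        · exact h
        · exact absurd h (hω t ht0)
      refine ⟨t - 1, ⟨?_, ?_⟩, ?_⟩
      · show walkPos y ω (t - 1 + 1) = x
        rw [show t - 1 + 1 = t by omega]
        exact hwt
      · intro m hm hm'
        have hmt : m < t := by omega
        have := Nat.find_min hex hmt
        push_neg at this
        exact this hm
      · intro k hk
        rw [show t - 1 + 1 = t by omega, ← hwt, ← walkPos_add]
        exact hω (t + k) (by omega)
  · rintro (hesc | ⟨n, ⟨h1, h2⟩, h3⟩)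
    · exact escapes_mono (Set.subset_insert x A) hesc
    · intro m hm
      rcases lt_trichotomy m (n + 1) with hlt | rfl | hlt
      · exact fun hA => h2 m hm hlt (Set.mem_insert_iff.2 (Or.inr hA))
      · rw [h1]; exact hx
      · obtain ⟨k, hk0, rfl⟩ : ∃ k, 0 < k ∧ m = (n + 1) + k :=
          ⟨m - (n + 1), by omega, by omega⟩
        rw [walkPos_add, h1]
        exact h3 k hk0

lemma escapes_decomp_disjoint (y : ℤ) (A : Set ℤ) (x : ℤ) :
    Disjoint (escapes y (insert x A))
      (⋃ n : ℕ, (exact y (insert x A) x n ∩ shiftSeq (n + 1) ⁻¹' escapes x A)) := by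
  rw [Set.disjoint_left]
  rintro ω hesc hun
  simp only [Set.mem_iUnion, Set.mem_inter_iff] at hun
  obtain ⟨n, ⟨h1, -⟩, -⟩ := hun
  exact hesc (n + 1) (Nat.succ_pos n) (h1 ▸ Set.mem_insert x A)

lemma pieces_disjoint (y : ℤ) (A : Set ℤ) (x : ℤ) :
    Pairwise (Function.onFun Disjoint
      (fun n => exact y (insert x A) x n ∩ shiftSeq (n + 1) ⁻¹' escapes x A)) := by
  intro n m hnm
  exact Set.disjoint_of_subset Set.inter_subset_left Set.inter_subset_left
    (exact_disjoint (Set.mem_insert x A) (Set.mem_insert x A) (by tauto))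

/-- sum of reversed increments. -/
lemma sum_revFn (ω : ℕ → ℤ) (N : ℕ) : ∀ m, m ≤ N →
    ∑ i ∈ Finset.range m, revFn N ω i
      = (∑ i ∈ Finset.range (N - m), ω i) - ∑ i ∈ Finset.range N, ω i := by
  intro m
  induction m with
  | zero => intro _; simp
  | succ m ih =>
    intro hm
    rw [Finset.sum_range_succ, ih (by omega)]
    have h1 : revFn N ω m = -ω (N - 1 - m) := by rw [revFn, if_pos (by omega)]
    have h2 : N - m = (N - (m + 1)) + 1 := by omega
    rw [h1, h2, Finset.sum_range_succ]
    have h3 : N - (m + 1) = N - 1 - m := by omega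
    rw [h3]
    ring

lemma walkPos_revFn (a : ℤ) (ω : ℕ → ℤ) (N m : ℕ) (hm : m ≤ N) :
    walkPos a (revFn N ω) m
      = a - (∑ i ∈ Finset.range N, ω i) + ∑ i ∈ Finset.range (N - m), ω i := by
  rw [walkPos, sum_revFn ω N m hm]
  ring

/-- time reversal swaps the endpoints of an `exact` event. -/
lemma revFn_exact (a x : ℤ) (B : Set ℤ) (n : ℕ) :
    revFn (n + 1) ⁻¹' exact a B x n = exact x B a n := by
  ext ω
  simp only [Set.mem_preimage, exact, Set.mem_setOf_eq]
  constructor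
  · rintro ⟨h1, h2⟩
    rw [walkPos_revFn a ω (n + 1) (n + 1) le_rfl] at h1
    simp only [Nat.sub_self, Finset.range_zero, Finset.sum_empty, add_zero] at h1
    constructor
    · rw [walkPos]; omega
    · intro m hm hm'
      have := h2 (n + 1 - m) (by omega) (by omega)
      rw [walkPos_revFn a ω (n + 1) (n + 1 - m) (by omega)] at this
      have he : n + 1 - (n + 1 - m) = m := by omega
      rw [he] at this
      have heq : a - (∑ i ∈ Finset.range (n + 1), ω i) + ∑ i ∈ Finset.range m, ω i
          = walkPos x ω m := by rw [walkPos]; omega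
      rw [heq] at this
      exact this
  · rintro ⟨h1, h2⟩
    have hS : a - (∑ i ∈ Finset.range (n + 1), ω i) = x := by
      rw [walkPos] at h1; omega
    constructor
    · rw [walkPos_revFn a ω (n + 1) (n + 1) le_rfl]
      simp only [Nat.sub_self, Finset.range_zero, Finset.sum_empty, add_zero]
      omega
    · intro m hm hm'
      rw [walkPos_revFn a ω (n + 1) m (by omega)]
      have : a - (∑ i ∈ Finset.range (n + 1), ω i) + ∑ i ∈ Finset.range (n + 1 - m), ω i
          = walkPos x ω (n + 1 - m) := by rw [walkPos]; omega
      rw [this]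
      exact h2 (n + 1 - m) (by omega) (by omega)
end CapInc

namespace CapInc

variable {μ : Measure (ℕ → ℤ)} {p : ℤ → ENNReal}

lemma measurableSet_exact (y : ℤ) (B : Set ℤ) (a : ℤ) (n : ℕ) :
    MeasurableSet (exact y B a n) := (detBy_exact y B a n).measurableSet

lemma exact_rev_measure (hw : IsRandomWalk μ p) (hsym : ∀ z : ℤ, p (-z) = p z)
    (a x : ℤ) (B : Set ℤ) (n : ℕ) :
    μ (exact a B x n) = μ (exact x B a n) := by
  rw [← revFn_exact a x B n]
  exact (measure_revFn_preimage hw hsym (detBy_exact a B x n)).symm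

lemma escapes_measure (hw : IsRandomWalk μ p) (y : ℤ) (A : Set ℤ) (x : ℤ) (hx : x ∉ A) :
    μ (escapes y A) = μ (escapes y (insert x A))
      + (∑' n : ℕ, μ (exact y (insert x A) x n)) * μ (escapes x A) := by
  rw [escapes_decomp y A x hx]
  rw [measure_union (escapes_decomp_disjoint y A x)
    (MeasurableSet.iUnion fun n => (measurableSet_exact _ _ _ _).inter
      ((measurable_shiftSeq (n + 1)) (measurableSet_escapes x A)))]
  congr 1
  rw [measure_iUnion (pieces_disjoint y A x) (fun n => (measurableSet_exact _ _ _ _).inter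
      ((measurable_shiftSeq (n + 1)) (measurableSet_escapes x A)))]
  rw [← ENNReal.tsum_mul_right]
  exact tsum_congr fun n => (detBy_exact y _ x n).inter_shift hw (measurableSet_escapes x A)

lemma hits_measure (y : ℤ) (B : Set ℤ) :
    μ (hits y B) = ∑' a : ↥B, ∑' n : ℕ, μ (exact y B (a : ℤ) n) := by
  rw [hits_eq]
  rw [measure_iUnion ?_ (fun q => measurableSet_exact _ _ _ _)]
  · rw [ENNReal.tsum_prod']
    exact ENNReal.tsum_comm
  · intro q q' hqq
    refine exact_disjoint q.2.2 q'.2.2 ?_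
    rintro ⟨h1, h2⟩
    exact hqq (Prod.ext h1 (Subtype.ext h2))

lemma tsum_insert_set {x : ℤ} {A : Set ℤ} (hx : x ∉ A) (f : ℤ → ENNReal) :
    ∑' a : ↥(insert x A), f a = f x + ∑' a : ↥A, f a := by
  rw [Set.insert_eq]
  rw [Summable.tsum_union_disjoint (Set.disjoint_singleton_left.mpr hx)
    ENNReal.summable ENNReal.summable]
  rw [tsum_singleton]

end CapInc

namespace CapInc

lemma capSetE_insert {μ : Measure (ℕ → ℤ)} {p : ℤ → ENNReal}
    (hw : IsRandomWalk μ p) (hsym : ∀ z : ℤ, p (-z) = p z)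
    (A : Set ℤ) (x : ℤ) (hx : x ∉ A) :
    capSetE μ (insert x A)
      = capSetE μ A + μ (escapes x A) * μ (escapes x (insert x A)) := by
  classical
  haveI : IsProbabilityMeasure μ := hw.1
  set e : ENNReal := μ (escapes x A) with he
  set e' : ENNReal := μ (escapes x (insert x A)) with he'
  set q : ENNReal := ∑' n : ℕ, μ (exact x (insert x A) x n) with hq
  set β : ENNReal := ∑' a : ↥A, ∑' n : ℕ, μ (exact x (insert x A) (a : ℤ) n) with hβ
  set S : ENNReal := ∑' a : ↥A, μ (escapes (a : ℤ) (insert x A)) with hS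
  have h4 : e = e' + q * e := escapes_measure hw x A x hx
  have hhits : μ (hits x (insert x A)) = q + β := by
    rw [hits_measure x (insert x A),
      tsum_insert_set hx (fun z => ∑' n : ℕ, μ (exact x (insert x A) z n))]
  have hm : MeasurableSet (hits x (insert x A)) := by
    have h := measurableSet_escapes x (insert x A)
    rw [escapes_eq_compl] at h
    simpa using h.compl
  have h3 : q + β + e' = 1 := by
    have hcompl := measure_add_measure_compl (μ := μ) hm
    rw [← escapes_eq_compl x (insert x A), measure_univ, hhits] at hcompl
    exact hcompl
  have h1 : capSetE μ A = S + β * e := by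
    unfold capSetE
    have hterm : ∀ a : ↥A, μ (escapes (a : ℤ) A)
        = μ (escapes (a : ℤ) (insert x A))
          + (∑' n : ℕ, μ (exact x (insert x A) (a : ℤ) n)) * e := by
      intro a
      rw [escapes_measure hw (a : ℤ) A x hx]
      congr 2
      exact tsum_congr fun n => exact_rev_measure hw hsym (a : ℤ) x (insert x A) n
    rw [tsum_congr hterm, ENNReal.tsum_add, hS, hβ, ENNReal.tsum_mul_right]
  have h2 : capSetE μ (insert x A) = e' + S := by
    unfold capSetE
    rw [tsum_insert_set hx (fun z => μ (escapes z (insert x A)))]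
  have hqe : q * e ≠ ⊤ := by
    have hq1 : q ≤ 1 := by
      rw [← h3]
      exact le_self_add.trans le_self_add
    have he1 : e ≤ 1 := by rw [he]; exact prob_le_one
    exact ne_top_of_le_ne_top ENNReal.one_ne_top
      (by calc q * e ≤ 1 * 1 := mul_le_mul' hq1 he1
        _ = 1 := one_mul 1)
  have hβe : β * e + e' * e = e' := by
    have h6 : q * e + (β * e + e' * e) = q * e + e' := by
      calc q * e + (β * e + e' * e) = (q + β + e') * e := by ring
        _ = 1 * e := by rw [h3]
        _ = e := one_mul e
        _ = e' + q * e := h4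
        _ = q * e + e' := by ring
    exact (ENNReal.add_right_inj hqe).mp h6
  calc capSetE μ (insert x A) = e' + S := h2
    _ = (β * e + e' * e) + S := by rw [hβe]
    _ = (S + β * e) + e * e' := by ring
    _ = capSetE μ A + e * e' := by rw [h1]

end CapInc

/-- For a transient symmetric random walk, a set `A` of finite capacity
and `x ∉ A`, with `A' = A ∪ {x}`, one has `cap(A') - cap(A) = E_A(x)·E'_A(x)`, which
lies in `[E'_A(x)², E_A(x)²]`. -/
theorem capacity_increment
    (μ : MeasureTheory.Measure (ℕ → ℤ)) (p : ℤ → ENNReal)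
    (hwalk : IsRandomWalk μ p) (hsym : ∀ x : ℤ, p (-x) = p x)
    (htrans : Transient μ)
    (A : Set ℤ) (hcap : capSetE μ A ≠ ⊤) (x : ℤ) (hx : x ∉ A) :
    (capSetE μ (insert x A)).toReal - (capSetE μ A).toReal
        = escProb μ A x * escProb μ (insert x A) x ∧
      escProb μ (insert x A) x ^ 2
        ≤ (capSetE μ (insert x A)).toReal - (capSetE μ A).toReal ∧
      (capSetE μ (insert x A)).toReal - (capSetE μ A).toReal
        ≤ escProb μ A x ^ 2 := by
  haveI : IsProbabilityMeasure μ := hwalk.1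
  have hkey := CapInc.capSetE_insert hwalk hsym A x hx
  have hee : μ (escapes x A) * μ (escapes x (insert x A)) ≠ ⊤ :=
    ENNReal.mul_ne_top (measure_ne_top μ _) (measure_ne_top μ _)
  have hdiff : (capSetE μ (insert x A)).toReal - (capSetE μ A).toReal
      = escProb μ A x * escProb μ (insert x A) x := by
    rw [hkey, ENNReal.toReal_add hcap hee, ENNReal.toReal_mul]
    unfold escProb
    ring
  have hle : escProb μ (insert x A) x ≤ escProb μ A x :=
    ENNReal.toReal_mono (measure_ne_top μ _)
      (measure_mono (CapInc.escapes_mono (Set.subset_insert x A)))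
  refine ⟨hdiff, ?_, ?_⟩
  · rw [hdiff]
    calc escProb μ (insert x A) x ^ 2
        = escProb μ (insert x A) x * escProb μ (insert x A) x := pow_two _
      _ ≤ escProb μ A x * escProb μ (insert x A) x :=
          mul_le_mul_of_nonneg_right hle ENNReal.toReal_nonneg
  · rw [hdiff]
    calc escProb μ A x * escProb μ (insert x A) x
        ≤ escProb μ A x * escProb μ A x :=
          mul_le_mul_of_nonneg_left hle ENNReal.toReal_nonneg
      _ = escProb μ A x ^ 2 := (pow_two _).symm

end
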